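/- For every n ∈ ℕ and all nonnegative real numbers a_1, …, a_n, one has Σ_{i=1}^n a_i / √(Σ_{j=1}^i a_j) ≤ 2 √(Σ_{i=1}^n a_i), where any term whose denominator √(Σ_{j=1}^i a_j) is zero is interpreted as 0. -/

import Mathlib

/-- AdaGrad stepsize inequality (Lemma 4.2 of Dorfman–Levy): for nonnegative reals
`a 1, …, a n`, `∑_{i=1}^n a i / √(∑_{j=1}^i a j) ≤ 2 √(∑_{i=1}^n a i)`.
(In Lean, division by zero is zero, matching the stated convention.) -/
theorem stmt_6 (n : ℕ) (a : ℕ → ℝ) (ha : ∀ i, 0 ≤ a i) :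
    ∑ i ∈ Finset.Icc 1 n, a i / Real.sqrt (∑ j ∈ Finset.Icc 1 i, a j)
      ≤ 2 * Real.sqrt (∑ i ∈ Finset.Icc 1 n, a i) := by
  induction n with
  | zero => simp
  | succ n ih =>
    have h1 : (1 : ℕ) ≤ n + 1 := Nat.le_add_left 1 n
    rw [Finset.sum_Icc_succ_top h1, Finset.sum_Icc_succ_top h1]
    set S := ∑ j ∈ Finset.Icc 1 n, a j with hS
    have hSnn : 0 ≤ S := Finset.sum_nonneg fun i _ => ha i
    have hann : 0 ≤ a (n + 1) := ha (n + 1)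
    have key : a (n + 1) / Real.sqrt (S + a (n + 1))
        ≤ 2 * Real.sqrt (S + a (n + 1)) - 2 * Real.sqrt S := by
      rcases eq_or_lt_of_le (by positivity : (0:ℝ) ≤ S + a (n + 1)) with h | h
      · have hS0 : S = 0 := by nlinarith
        have ha0 : a (n + 1) = 0 := by nlinarith
        simp [hS0, ha0]
      · have hs' : 0 < Real.sqrt (S + a (n + 1)) := Real.sqrt_pos.mpr h
        have hsq' : Real.sqrt (S + a (n + 1)) ^ 2 = S + a (n + 1) :=
          Real.sq_sqrt (le_of_lt h)
        have hsq : Real.sqrt S ^ 2 = S := Real.sq_sqrt hSnn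
        have hsnn : 0 ≤ Real.sqrt S := Real.sqrt_nonneg S
        rw [div_le_iff₀ hs']
        nlinarith [sq_nonneg (Real.sqrt (S + a (n + 1)) - Real.sqrt S)]
    linarith
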